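/- arXiv:1505.02689 — 2 statements merged into one kernel-verified Lean document; each statement's English description precedes it below -/
import Mathlib

section
/- Let (Ω, 𝓕, P) be a probability space, A ∈ 𝓕 an event with P(A) > 0, and A₁, …, A_N ∈ 𝓕 a partition of A into N pairwise disjoint measurable sets with P(A_k) = P(A)/N for every k. Let g : Ω → ℝ be square-integrable with respect to each conditional measure P(·|A_k) and with respect to P(·|A). Suppose ξ₁, …, ξ_N are i.i.d. Ω-valued random variables with common law P(·|A) and η₁, …, η_N are independent Ω-valued random variables with η_k distributed according to P(·|A_k). Then Var[(P(A)/N) · Σ_{k=1}^N g(η_k)] ≤ Var[(P(A)/N) · Σ_{j=1}^N g(ξ_j)]; that is, the estimator obtained by drawing one sample from each of the N equal-probability substrata of A never has larger variance than the estimator obtained by drawing N samples from A itself. -/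
open MeasureTheory ProbabilityTheory
open scoped ENNReal ProbabilityTheory

/-- Variance of a composition equals variance under the pushforward measure. -/
lemma var_map' {Ω Ω' : Type*} [MeasurableSpace Ω] [MeasurableSpace Ω']
    {P' : Measure Ω'} [IsProbabilityMeasure P'] {T : Ω' → Ω} (hT : Measurable T)
    {g : Ω → ℝ} [IsProbabilityMeasure (Measure.map T P')]
    (hg : MemLp g 2 (Measure.map T P')) :
    variance (fun ω => g (T ω)) P' = variance g (Measure.map T P') := by
  have h1 : MemLp (fun ω => g (T ω)) 2 P' :=
    (memLp_map_measure_iff hg.aestronglyMeasurable hT.aemeasurable).mp hg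
  rw [variance_eq_sub h1, variance_eq_sub hg,
    integral_map hT.aemeasurable hg.aestronglyMeasurable,
    integral_map hT.aemeasurable
      (by simpa [sq] using hg.aestronglyMeasurable.mul hg.aestronglyMeasurable)]
  simp [Function.comp]

/-- Integrals against a conditional measure on a set partitioned into `N` equal-probability
pieces are averages of the integrals against the conditional measures on the pieces. -/
lemma cond_integral_avg' {Ω : Type*} [MeasurableSpace Ω] (P : Measure Ω)
    [IsProbabilityMeasure P]
    {A : Set Ω} (hA0 : P A ≠ 0)
    {N : ℕ} {As : Fin N → Set Ω} (hAsMeas : ∀ k, MeasurableSet (As k))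
    (hAsDisj : Pairwise (Function.onFun Disjoint As))
    (hAsUnion : (⋃ k, As k) = A)
    (hAsProb : ∀ k, P (As k) = P A / (N : ℝ≥0∞))
    {f : Ω → ℝ} (hf : ∀ k, Integrable f (P[|As k])) :
    ∫ x, f x ∂(P[|A]) = (N : ℝ)⁻¹ * ∑ k, ∫ x, f x ∂(P[|As k]) := by
  have hAtop : P A ≠ ∞ := measure_ne_top P A
  have hk0 : ∀ k, P (As k) ≠ 0 := by
    intro k; rw [hAsProb k]
    simp [ENNReal.div_eq_zero_iff, hA0]
  have hktop : ∀ k, P (As k) ≠ ∞ := fun k => measure_ne_top P _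
  have hrk : ∀ k, P.restrict (As k) = P (As k) • (P[|As k]) := by
    intro k
    rw [ProbabilityTheory.cond, smul_smul, ENNReal.mul_inv_cancel (hk0 k) (hktop k), one_smul]
  have hfr : ∀ k, Integrable f (P.restrict (As k)) := by
    intro k; rw [hrk k]; exact (hf k).smul_measure (hktop k)
  have hres : P.restrict A = Measure.sum (fun k => P.restrict (As k)) := by
    rw [← hAsUnion, Measure.restrict_iUnion hAsDisj hAsMeas]
  rw [ProbabilityTheory.cond, integral_smul_measure, hres, Measure.sum_fintype,
    integral_finset_sum_measure (fun k _ => hfr k)]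
  have : ∀ k, ∫ x, f x ∂(P.restrict (As k)) = (P (As k)).toReal * ∫ x, f x ∂(P[|As k]) := by
    intro k; rw [hrk k, integral_smul_measure]; simp
  simp only [this, hAsProb, smul_eq_mul, Finset.mul_sum, ← mul_assoc]
  congr 1; ext k; congr 1
  rw [ENNReal.toReal_inv, ENNReal.toReal_div, ENNReal.toReal_natCast]
  have h1 : (P A).toReal ≠ 0 := ENNReal.toReal_ne_zero.mpr ⟨hA0, hAtop⟩
  field_simp

/-- The sum of the conditional variances over a balanced partition of `A` is at most
`N` times the conditional variance given `A`. -/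
lemma sum_cond_variance_le' {Ω : Type*} [MeasurableSpace Ω] (P : Measure Ω)
    [IsProbabilityMeasure P]
    {A : Set Ω} (hA0 : P A ≠ 0)
    {N : ℕ} (hN : 0 < N) {As : Fin N → Set Ω} (hAsMeas : ∀ k, MeasurableSet (As k))
    (hAsDisj : Pairwise (Function.onFun Disjoint As))
    (hAsUnion : (⋃ k, As k) = A)
    (hAsProb : ∀ k, P (As k) = P A / (N : ℝ≥0∞))
    {g : Ω → ℝ} (hgA : MemLp g 2 (P[|A])) (hgAs : ∀ k, MemLp g 2 (P[|As k])) :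
    ∑ k, variance g (P[|As k]) ≤ (N : ℝ) * variance g (P[|A]) := by
  have hk0 : ∀ k, P (As k) ≠ 0 := by
    intro k; rw [hAsProb k]
    simp [ENNReal.div_eq_zero_iff, hA0]
  haveI : IsProbabilityMeasure (P[|A]) := cond_isProbabilityMeasure hA0
  haveI : ∀ k, IsProbabilityMeasure (P[|As k]) := fun k => cond_isProbabilityMeasure (hk0 k)
  set m : Fin N → ℝ := fun k => ∫ x, g x ∂(P[|As k]) with hm
  set s : Fin N → ℝ := fun k => ∫ x, g x ^ 2 ∂(P[|As k]) with hs
  have h1 : ∫ x, g x ∂(P[|A]) = (N : ℝ)⁻¹ * ∑ k, m k :=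
    cond_integral_avg' P hA0 hAsMeas hAsDisj hAsUnion hAsProb
      (fun k => (hgAs k).integrable one_le_two)
  have h2 : ∫ x, g x ^ 2 ∂(P[|A]) = (N : ℝ)⁻¹ * ∑ k, s k :=
    cond_integral_avg' P hA0 hAsMeas hAsDisj hAsUnion hAsProb
      (fun k => (hgAs k).integrable_sq)
  have hVA : variance g (P[|A]) = (N : ℝ)⁻¹ * ∑ k, s k - ((N : ℝ)⁻¹ * ∑ k, m k) ^ 2 := by
    rw [variance_eq_sub hgA]
    simp only [Pi.pow_apply]
    rw [h1, h2]
  have hVk : ∀ k, variance g (P[|As k]) = s k - m k ^ 2 := by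
    intro k
    rw [variance_eq_sub (hgAs k)]
    simp only [Pi.pow_apply, hm, hs]
  have hcheb : (∑ k, m k) ^ 2 ≤ (N : ℝ) * ∑ k, m k ^ 2 := by
    have := sq_sum_le_card_mul_sum_sq (s := (Finset.univ : Finset (Fin N))) (f := m)
    simpa using this
  have hNpos : (0 : ℝ) < N := Nat.cast_pos.mpr hN
  simp only [hVk, hVA]
  rw [Finset.sum_sub_distrib]
  have heq : (N : ℝ) * ((N : ℝ)⁻¹ * ∑ k, s k - ((N : ℝ)⁻¹ * ∑ k, m k) ^ 2)
      = ∑ k, s k - (∑ k, m k) ^ 2 / N := by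
    field_simp
  rw [heq]
  have hdiv : (∑ k, m k) ^ 2 / N ≤ ∑ k, m k ^ 2 := by
    rw [div_le_iff₀ hNpos]
    linarith [hcheb]
  linarith

/-- **Theorem 1 (balanced stratum refinement reduces variance).**
Given an event `A` with `P A > 0`, partitioned into `N` pairwise disjoint measurable
substrata `As k` each of probability `P A / N`, and a square-integrable function `g`,
the stratified estimator drawing one sample from each substratum (via the independent
random variables `η k` with laws `P[|As k]`) never has larger variance than the
estimator drawing `N` i.i.d. samples from `A` itself (via `ξ j` with law `P[|A]`). -/
theorem refined_stratification_variance_le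
    {Ω Ω' : Type*} [MeasurableSpace Ω] [MeasurableSpace Ω']
    (P : Measure Ω) [IsProbabilityMeasure P]
    (P' : Measure Ω') [IsProbabilityMeasure P']
    (A : Set Ω) (hA : MeasurableSet A) (hApos : 0 < P A)
    (N : ℕ) (hN : 0 < N)
    (As : Fin N → Set Ω) (hAsMeas : ∀ k, MeasurableSet (As k))
    (hAsDisj : Pairwise (Function.onFun Disjoint As))
    (hAsUnion : (⋃ k, As k) = A)
    (hAsProb : ∀ k, P (As k) = P A / (N : ℝ≥0∞))
    (g : Ω → ℝ)
    (hgA : MemLp g 2 (P[|A])) (hgAs : ∀ k, MemLp g 2 (P[|As k]))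
    (ξ η : Fin N → Ω' → Ω)
    (hξMeas : ∀ j, Measurable (ξ j)) (hηMeas : ∀ k, Measurable (η k))
    (hξLaw : ∀ j, Measure.map (ξ j) P' = P[|A])
    (hηLaw : ∀ k, Measure.map (η k) P' = P[|As k])
    (hξIndep : iIndepFun ξ P')
    (hηIndep : iIndepFun η P') :
    variance (fun ω => (P A).toReal / (N : ℝ) * ∑ k, g (η k ω)) P' ≤
      variance (fun ω => (P A).toReal / (N : ℝ) * ∑ j, g (ξ j ω)) P' := by
  have hA0 : P A ≠ 0 := hApos.ne'
  have key : ∑ k, variance g (P[|As k]) ≤ (N : ℝ) * variance g (P[|A]) :=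
    sum_cond_variance_le' P hA0 hN hAsMeas hAsDisj hAsUnion hAsProb hgA hgAs
  have hk0 : ∀ k, P (As k) ≠ 0 := by
    intro k; rw [hAsProb k]; simp [ENNReal.div_eq_zero_iff, hA0]
  haveI : IsProbabilityMeasure (P[|A]) := cond_isProbabilityMeasure hA0
  haveI hPk : ∀ k, IsProbabilityMeasure (P[|As k]) :=
    fun k => cond_isProbabilityMeasure (hk0 k)
  set c : ℝ := (P A).toReal / (N : ℝ) with hc
  -- MemLp of compositions
  have hYmem : ∀ k, MemLp (fun ω => g (η k ω)) 2 P' := fun k =>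
    (memLp_map_measure_iff (by rw [hηLaw k]; exact (hgAs k).aestronglyMeasurable)
      (hηMeas k).aemeasurable).mp (by rw [hηLaw k]; exact hgAs k)
  have hXmem : ∀ j, MemLp (fun ω => g (ξ j ω)) 2 P' := fun j =>
    (memLp_map_measure_iff (by rw [hξLaw j]; exact hgA.aestronglyMeasurable)
      (hξMeas j).aemeasurable).mp (by rw [hξLaw j]; exact hgA)
  -- pairwise independence of compositions
  have hYindep : Set.Pairwise (Finset.univ : Finset (Fin N))
      (fun i j => IndepFun (fun ω => g (η i ω)) (fun ω => g (η j ω)) P') := by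
    intro i _ j _ hij
    have hGi := (hgAs i).aestronglyMeasurable.stronglyMeasurable_mk.measurable
    have hGj := (hgAs j).aestronglyMeasurable.stronglyMeasurable_mk.measurable
    have hind := (hηIndep.indepFun hij).comp hGi hGj
    refine hind.congr ?_ ?_
    · exact ae_eq_comp (μ := P') (hηMeas i).aemeasurable
        (by rw [hηLaw i]; exact ((hgAs i).aestronglyMeasurable.ae_eq_mk).symm)
    · exact ae_eq_comp (μ := P') (hηMeas j).aemeasurable
        (by rw [hηLaw j]; exact ((hgAs j).aestronglyMeasurable.ae_eq_mk).symm)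
  have hXindep : Set.Pairwise (Finset.univ : Finset (Fin N))
      (fun i j => IndepFun (fun ω => g (ξ i ω)) (fun ω => g (ξ j ω)) P') := by
    intro i _ j _ hij
    have hG := hgA.aestronglyMeasurable.stronglyMeasurable_mk.measurable
    have hind := (hξIndep.indepFun hij).comp hG hG
    refine hind.congr ?_ ?_ <;>
    · exact ae_eq_comp (μ := P') (hξMeas _).aemeasurable
        (by rw [hξLaw _]; exact (hgA.aestronglyMeasurable.ae_eq_mk).symm)
  -- rewrite both sides as scaled sums of variances
  have hsumY : (fun ω => ∑ k, g (η k ω)) = ∑ k, (fun ω => g (η k ω)) := by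
    ext ω; simp
  have hsumX : (fun ω => ∑ j, g (ξ j ω)) = ∑ j, (fun ω => g (ξ j ω)) := by
    ext ω; simp
  have hL : variance (fun ω => c * ∑ k, g (η k ω)) P'
      = c ^ 2 * ∑ k, variance g (P[|As k]) := by
    rw [variance_const_mul]
    congr 1
    rw [hsumY, IndepFun.variance_sum (fun k _ => hYmem k) hYindep]
    refine Finset.sum_congr rfl fun k _ => ?_
    haveI : IsProbabilityMeasure (Measure.map (η k) P') := by rw [hηLaw k]; infer_instance
    have := var_map' (P' := P') (hηMeas k) (g := g) (by rw [hηLaw k]; exact hgAs k)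
    rw [this, hηLaw k]
  have hR : variance (fun ω => c * ∑ j, g (ξ j ω)) P'
      = c ^ 2 * ((N : ℝ) * variance g (P[|A])) := by
    rw [variance_const_mul]
    congr 1
    rw [hsumX, IndepFun.variance_sum (fun j _ => hXmem j) hXindep]
    have : ∀ j : Fin N, variance (fun ω => g (ξ j ω)) P' = variance g (P[|A]) := by
      intro j
      haveI : IsProbabilityMeasure (Measure.map (ξ j) P') := by rw [hξLaw j]; infer_instance
      have := var_map' (P' := P') (hξMeas j) (g := g) (by rw [hξLaw j]; exact hgA)
      rw [this, hξLaw j]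
    simp [this, Finset.sum_const, nsmul_eq_mul]
  rw [hL, hR]
  exact mul_le_mul_of_nonneg_left key (sq_nonneg c)
end

section
/- Let (Ω, 𝓕, P) be a probability space and A₁, …, A_N a measurable partition of Ω into N strata of equal probability P(A_k) = 1/N, and let g : Ω → ℝ be square-integrable with respect to P. Let X₁, …, X_N be independent random variables with X_k having law P(·|A_k), and let T_S = (1/N) Σ_{k=1}^N g(X_k) be the balanced stratified estimator with one sample per stratum. Then Var[T_S] = Var_P(g)/N − (1/N) Σ_{k=1}^N (1/N) · ( μ_k − τ )², where μ_k = E_{P(·|A_k)}[g] is the conditional mean of g on stratum A_k and τ = E_P[g]; i.e., the stratified estimator's variance equals the simple-random-sampling variance σ²/N minus the nonnegative term (1/N) Σ_k p_k (μ_k − τ)². -/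
open MeasureTheory ProbabilityTheory
open scoped ENNReal ProbabilityTheory

private lemma variance_congr_aux {Ω : Type*} [MeasurableSpace Ω] {μ : Measure Ω}
    {f f' : Ω → ℝ} (h : f =ᵐ[μ] f') : variance f μ = variance f' μ := by
  unfold ProbabilityTheory.variance ProbabilityTheory.evariance
  rw [integral_congr_ae h]
  exact congrArg ENNReal.toReal (lintegral_congr_ae (h.mono fun ω hω => by dsimp only; rw [hω]))

/-- **McKay–Beckman–Conover variance reduction identity (Eq. 8).**
If `Ω` is partitioned into `N` measurable strata `A k` of equal probability `1/N`,
`g` is square-integrable with respect to `P`, and `X k` are independent with `X k`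
having law `P[|A k]`, then the balanced stratified estimator
`T_S = (1/N) ∑ k g(X k)` satisfies
`Var[T_S] = Var_P(g)/N - (1/N) ∑ k (1/N) (μ_k - τ)²`,
where `μ_k = E_{P[|A k]}[g]` and `τ = E_P[g]`. -/
theorem balanced_stratified_sampling_variance_identity
    {Ω Ω' : Type*} [MeasurableSpace Ω] [MeasurableSpace Ω']
    (P : Measure Ω) [IsProbabilityMeasure P]
    (P' : Measure Ω') [IsProbabilityMeasure P']
    (N : ℕ) (hN : 0 < N)
    (A : Fin N → Set Ω) (hAMeas : ∀ k, MeasurableSet (A k))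
    (hADisj : Pairwise (Function.onFun Disjoint A))
    (hAUnion : (⋃ k, A k) = Set.univ)
    (hAProb : ∀ k, P (A k) = 1 / (N : ℝ≥0∞))
    (g : Ω → ℝ) (hg : MemLp g 2 P)
    (X : Fin N → Ω' → Ω)
    (hXMeas : ∀ k, Measurable (X k))
    (hXLaw : ∀ k, Measure.map (X k) P' = P[|A k])
    (hXIndep : iIndepFun X P') :
    variance (fun ω => (1 / (N : ℝ)) * ∑ k, g (X k ω)) P' =
      variance g P / (N : ℝ) -
        (1 / (N : ℝ)) * ∑ k, (1 / (N : ℝ)) *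
          ((∫ ω, g ω ∂(P[|A k])) - ∫ ω, g ω ∂P) ^ 2 := by
  have hNR : (N : ℝ) ≠ 0 := Nat.cast_ne_zero.mpr hN.ne'
  have hAne : ∀ k, P (A k) ≠ 0 := by
    intro k; rw [hAProb k]
    simp [hN.ne', ENNReal.div_eq_zero_iff]
  haveI hPI : ∀ k, IsProbabilityMeasure (P[|A k]) :=
    fun k => cond_isProbabilityMeasure (hAne k)
  have hcond : ∀ k, (P[|A k]) = ((N : ℝ≥0∞) • P.restrict (A k)) := by
    intro k
    rw [ProbabilityTheory.cond, hAProb k, one_div, inv_inv]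
  -- MemLp of g with respect to each conditional measure
  have hgk : ∀ k, MemLp g 2 (P[|A k]) := by
    intro k; rw [hcond k]
    exact (hg.restrict (A k)).smul_measure (by simp)
  have hMP : ∀ k, MeasurePreserving (X k) P' (P[|A k]) := fun k => ⟨hXMeas k, hXLaw k⟩
  have hgXk : ∀ k, MemLp (fun ω => g (X k ω)) 2 P' :=
    fun k => (hgk k).comp_measurePreserving (hMP k)
  -- pairwise independence of g ∘ X k
  have hac : ∀ k, (P[|A k]) ≪ P := by
    intro k; rw [hcond k]
    intro s hs
    simp only [Measure.smul_apply, Measure.restrict_apply₀' ((hAMeas k).nullMeasurableSet),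
      smul_eq_mul]
    rw [measure_mono_null Set.inter_subset_left hs, mul_zero]
  set g' : Ω → ℝ := hg.1.mk g with hg'def
  have hg'meas : Measurable g' := hg.1.stronglyMeasurable_mk.measurable
  have hgg' : g =ᵐ[P] g' := hg.1.ae_eq_mk
  have hgg'X : ∀ k, (fun ω => g (X k ω)) =ᵐ[P'] fun ω => g' (X k ω) := by
    intro k
    exact ae_eq_comp (hXMeas k).aemeasurable (by rw [hXLaw k]; exact hgg'.filter_mono (hac k).ae_le)
  have hpair : ∀ i ∈ Finset.univ, ∀ j ∈ Finset.univ, i ≠ j →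
      IndepFun (fun ω => g (X i ω)) (fun ω => g (X j ω)) P' := by
    intro i _ j _ hij
    exact ((hXIndep.indepFun hij).comp hg'meas hg'meas).congr
      (hgg'X i).symm (hgg'X j).symm
  -- variance of composition equals variance under conditional measure
  have hInt : ∀ k, ∫ ω, g (X k ω) ∂P' = ∫ ω, g ω ∂(P[|A k]) := by
    intro k
    rw [← hXLaw k]
    exact (integral_map (hXMeas k).aemeasurable
      (by rw [hXLaw k]; exact (hgk k).1)).symm
  have hIntSq : ∀ k, ∫ ω, g (X k ω) ^ 2 ∂P' = ∫ ω, g ω ^ 2 ∂(P[|A k]) := by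
    intro k
    rw [← hXLaw k]
    exact (integral_map (hXMeas k).aemeasurable
      (by rw [hXLaw k]; exact ((hgk k).1.pow 2))).symm
  have hVarComp : ∀ k, variance (fun ω => g (X k ω)) P' = variance g (P[|A k]) := by
    intro k
    rw [variance_eq_sub (hgXk k), variance_eq_sub (hgk k)]
    simp only [Pi.pow_apply]
    rw [hInt k, hIntSq k]
  -- sum of conditional integrals
  have hsum_int : ∀ f : Ω → ℝ, Integrable f P →
      ∑ k, ∫ ω, f ω ∂(P[|A k]) = (N : ℝ) * ∫ ω, f ω ∂P := by
    intro f hf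
    have h1 : ∀ k, ∫ ω, f ω ∂(P[|A k]) = (N : ℝ) * ∫ ω in A k, f ω ∂P := by
      intro k
      rw [hcond k, integral_smul_measure]
      simp
    simp_rw [h1, ← Finset.mul_sum]
    congr 1
    have h2 := integral_iUnion hAMeas hADisj (f := f) (μ := P)
      (by rw [hAUnion]; exact hf.integrableOn)
    rw [hAUnion, Measure.restrict_univ, tsum_fintype] at h2
    exact h2.symm
  have Hsq : ∑ k, ∫ ω, g ω ^ 2 ∂(P[|A k]) = (N : ℝ) * ∫ ω, g ω ^ 2 ∂P :=
    hsum_int _ hg.integrable_sq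
  have Hmu : ∑ k, ∫ ω, g ω ∂(P[|A k]) = (N : ℝ) * ∫ ω, g ω ∂P :=
    hsum_int _ (hg.integrable one_le_two)
  -- main computation
  have hmul : variance (fun ω => (1 / (N : ℝ)) * ∑ k, g (X k ω)) P'
      = (1 / (N : ℝ)) ^ 2 * variance (fun ω => ∑ k, g (X k ω)) P' :=
    variance_const_mul _ _ _
  have hsumfun : (fun ω => ∑ k, g (X k ω)) = ∑ k : Fin N, fun ω => g (X k ω) := by
    funext ω; simp
  have hvarsum : variance (fun ω => ∑ k, g (X k ω)) P'
      = ∑ k, variance g (P[|A k]) := by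
    rw [hsumfun, IndepFun.variance_sum (fun k _ => hgXk k) (fun i hi j hj hij => hpair i hi j hj hij)]
    exact Finset.sum_congr rfl fun k _ => hVarComp k
  rw [hmul, hvarsum]
  have hvdk : ∀ k, variance g (P[|A k])
      = (∫ ω, g ω ^ 2 ∂(P[|A k])) - (∫ ω, g ω ∂(P[|A k])) ^ 2 := by
    intro k
    rw [variance_eq_sub (hgk k)]
    simp only [Pi.pow_apply]
  have hvP : variance g P = (∫ ω, g ω ^ 2 ∂P) - (∫ ω, g ω ∂P) ^ 2 := by
    rw [variance_eq_sub hg]; simp only [Pi.pow_apply]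
  simp_rw [hvdk, hvP]
  have expand : ∀ k, (1 / (N : ℝ)) * ((∫ ω, g ω ∂(P[|A k])) - ∫ ω, g ω ∂P) ^ 2
      = (1 / (N : ℝ)) * (∫ ω, g ω ∂(P[|A k])) ^ 2
        - (2 * (1 / (N : ℝ)) * (∫ ω, g ω ∂P)) * (∫ ω, g ω ∂(P[|A k]))
        + (1 / (N : ℝ)) * (∫ ω, g ω ∂P) ^ 2 := by intro k; ring
  simp_rw [expand]
  simp only [Finset.sum_add_distrib, Finset.sum_sub_distrib, ← Finset.mul_sum,
    Finset.sum_const, Finset.card_univ, Fintype.card_fin, nsmul_eq_mul]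
  rw [Hsq, Hmu]
  field_simp
  ring
end
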